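/- In any dynamic mechanism where matchings are deterministic functions of market and action histories, a home's realized outcome under an arbitrary accept/reject strategy equals its outcome under the counterfactual strategy of rejecting everything before its first acceptance time and accepting then: for any home h and any strategy ā_h that first leads to acceptance of a placement at time t', the matchings through t' under (ā_h, a_{-h}) coincide with those under the counterfactual profile â(t', h). Consequently h's realized payoff depends only on its first acceptance time. -/
import Mathlib


/-- A one-to-one (partial) matching between children and homes. -/
structure Matching (C H : Type) where
  toHome : C → Option H
  toChild : H → Option C
  consistent : ∀ c h, toHome c = some h ↔ toChild h = some c

/-- A dynamic matching market: cardinal utilities, arrival times, waiting costs. -/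
structure Market (C H : Type) where
  U : C → H → ℝ
  V : H → C → ℝ
  arrC : C → ℕ
  arrH : H → ℕ
  wC : ℝ
  wH : ℝ

/-- Accept/reject action profiles of homes over time. -/
abbrev Actions (H : Type) := H → ℕ → Bool

/-- A dynamic mechanism: given the homes' action profile, a matching in each period. -/
abbrev Mechanism (C H : Type) := Actions H → ℕ → Matching C H

open scoped Classical in
/-- The counterfactual profile in which home `h` rejects every placement before `t'`,
accepts at `t'`, and otherwise plays as in `a`; all other homes play as in `a`. -/
noncomputable def cfProfile {H : Type} (a : Actions H) (h : H) (t' : ℕ) : Actions H :=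
  fun h' k =>
    if h' = h then (if k < t' then false else if k = t' then true else a h' k)
    else a h' k

namespace Market

variable {C H : Type}

/-- Time-discounted utility of home `h` for child `c` at time `t`:
`V_h^t(c) = V_h(c) - (t - arrival(h)) * w_H`. -/
noncomputable def Vt (M : Market C H) (h : H) (c : C) (t : ℕ) : ℝ :=
  M.V h c - ((t : ℝ) - (M.arrH h : ℝ)) * M.wH

/-- Child `c` is active (present in the market) at time `t`:
she has arrived and no home has yet accepted a placement with her. -/
def activeC (M : Market C H) (Q : Mechanism C H) (a : Actions H) (c : C) (t : ℕ) : Prop :=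
  M.arrC c ≤ t ∧ ¬ ∃ k < t, ∃ h, (Q a k).toHome c = some h ∧ a h k = true

/-- Home `h` is active (present in the market) at time `t`:
it has arrived and has not yet accepted a placement. -/
def activeH (M : Market C H) (Q : Mechanism C H) (a : Actions H) (h : H) (t : ℕ) : Prop :=
  M.arrH h ≤ t ∧ ¬ ∃ k < t, (Q a k).toChild h ≠ none ∧ a h k = true

/-- Admissibility: the mechanism only matches agents active in the current market. -/
def feasible (M : Market C H) (Q : Mechanism C H) : Prop :=
  ∀ a t c h, (Q a t).toHome c = some h → M.activeC Q a c t ∧ M.activeH Q a h t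

/-- Child `c` has been adopted (placement accepted) by time `t`. -/
def childAdopted (M : Market C H) (Q : Mechanism C H) (a : Actions H) (c : C) (t : ℕ) : Prop :=
  ∃ k ≤ t, ∃ h, (Q a k).toHome c = some h ∧ a h k = true

/-- Home `h` has accepted a placement by time `t`. -/
def homeAccepted (M : Market C H) (Q : Mechanism C H) (a : Actions H) (h : H) (t : ℕ) : Prop :=
  ∃ k ≤ t, (Q a k).toChild h ≠ none ∧ a h k = true

/-- Justified envy-freeness at every period and action profile: no mutually matched
child and home both strictly prefer each other to their assigned partners. -/
def justifiedEnvyFree (M : Market C H) (Q : Mechanism C H) : Prop :=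
  ∀ a t c h h' c', (Q a t).toHome c = some h' → (Q a t).toChild h = some c' →
    ¬ (M.U c h' < M.U c h ∧ M.V h c' < M.V h c)

/-- Individual rationality at every period and action profile. -/
def individuallyRational (M : Market C H) (Q : Mechanism C H) : Prop :=
  ∀ a t c h, (Q a t).toHome c = some h → 0 ≤ M.U c h ∧ 0 ≤ M.V h c

/-- Patience-freeness: any placement offered at `t` is weakly better (time-discounted)
than the placement the home would receive at any later `t'` in the counterfactual in
which it rejects all placements before `t'` and accepts at `t'`. -/
noncomputable def patienceFree (M : Market C H) (Q : Mechanism C H) : Prop :=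
  ∀ (a : Actions H) (t : ℕ) (h : H) (c : C), (Q a t).toChild h = some c →
    ∀ t' > t, ∀ c', (Q (cfProfile a h t') t').toChild h = some c' →
      M.Vt h c' t' ≤ M.Vt h c t

/-- Dynamic envy-freeness: justified envy-free, patience-free, individually rational. -/
noncomputable def dynamicEnvyFree (M : Market C H) (Q : Mechanism C H) : Prop :=
  M.justifiedEnvyFree Q ∧ M.patienceFree Q ∧ M.individuallyRational Q

/-- Strict non-wastefulness: after every history and action profile there is never an
active unmatched child and an active unmatched home that find each other acceptable. -/
def strictlyNonWasteful (M : Market C H) (Q : Mechanism C H) : Prop :=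
  ∀ a t, ¬ ∃ c h, M.activeC Q a c t ∧ M.activeH Q a h t ∧
    0 ≤ M.U c h ∧ 0 ≤ M.V h c ∧ (Q a t).toHome c = none ∧ (Q a t).toChild h = none

/-- Weak non-wastefulness: when every home accepts every offered placement,
no mutually acceptable unmatched pair ever remains. -/
def weaklyNonWasteful (M : Market C H) (Q : Mechanism C H) : Prop :=
  ∀ t, ¬ ∃ c h, M.activeC Q (fun _ _ => true) c t ∧ M.activeH Q (fun _ _ => true) h t ∧
    0 ≤ M.U c h ∧ 0 ≤ M.V h c ∧
    (Q (fun _ _ => true) t).toHome c = none ∧ (Q (fun _ _ => true) t).toChild h = none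

/-- The mechanism is a deterministic function of the history of markets (active sets)
and past matchings. -/
def historyDetermined (M : Market C H) (Q : Mechanism C H) : Prop :=
  ∀ a a' t,
    (∀ k ≤ t, ∀ c, M.activeC Q a c k ↔ M.activeC Q a' c k) →
    (∀ k ≤ t, ∀ h, M.activeH Q a h k ↔ M.activeH Q a' h k) →
    (∀ k < t, Q a k = Q a' k) →
    Q a t = Q a' t

/-- `x` is the realized (true-utility, time-discounted) payoff of home `h`:
the time-discounted utility of an accepted placement, or `0` if `h` never accepts. -/
noncomputable def payoffIs (M : Market C H) (Q : Mechanism C H) (a : Actions H)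
    (h : H) (x : ℝ) : Prop :=
  (∃ t c, (Q a t).toChild h = some c ∧ a h t = true ∧ x = M.Vt h c t) ∨
  ((∀ t c, (Q a t).toChild h = some c → a h t = false) ∧ x = 0)

end Market

/-- For any feasible, history-determined dynamic mechanism, a home's realized outcome
under an arbitrary accept/reject strategy whose first acceptance (of an offer) occurs
at `t'` coincides with its outcome under the counterfactual strategy of rejecting
everything before `t'` and accepting at `t'`: matchings coincide through `t'` and the
realized payoff is the same. -/
theorem outcome_depends_only_on_first_acceptance {C H : Type} (M : Market C H)
    (Q : Mechanism C H) (hfeas : M.feasible Q) (hdet : M.historyDetermined Q)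
    (h : H) (a' : Actions H) (t' : ℕ) (c : C)
    (hoff : (Q a' t').toChild h = some c) (hacc : a' h t' = true)
    (hfirst : ∀ k < t', (Q a' k).toChild h = none ∨ a' h k = false) :
    (∀ k ≤ t', Q (cfProfile a' h t') k = Q a' k) ∧
    (∀ x : ℝ, M.payoffIs Q a' h x → M.payoffIs Q (cfProfile a' h t') h x) := by
  set b := cfProfile a' h t' with hb
  have hbh : ∀ k < t', b h k = false := by
    intro k hk; simp [hb, cfProfile, hk, Nat.lt_iff_le_and_ne]
  have hbh' : b h t' = true := by simp [hb, cfProfile]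
  have hbo : ∀ h' k, h' ≠ h → b h' k = a' h' k := by
    intro h' k hne; simp [hb, cfProfile, hne]
  have key : ∀ t, t ≤ t' → Q b t = Q a' t := by
    intro t
    induction t using Nat.strong_induction_on with
    | _ t ih =>
      intro ht
      have hprev : ∀ k < t, Q b k = Q a' k := fun k hk =>
        ih k hk (le_of_lt (lt_of_lt_of_le hk ht))
      have hact : ∀ (h'' : H) (k : ℕ), k < t →
          (Q a' k).toChild h'' ≠ none → b h'' k = a' h'' k := by
        intro h'' k hk hne
        by_cases hh : h'' = h
        · subst hh
          have hkt : k < t' := lt_of_lt_of_le hk ht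
          rcases hfirst k hkt with h1 | h1
          · exact absurd h1 hne
          · rw [h1, hbh k hkt]
        · exact hbo _ _ hh
      apply hdet
      · intro k hk c0
        unfold Market.activeC
        have hiff : (∃ j < k, ∃ hh, (Q b j).toHome c0 = some hh ∧ b hh j = true) ↔
            (∃ j < k, ∃ hh, (Q a' j).toHome c0 = some hh ∧ a' hh j = true) := by
          constructor
          · rintro ⟨j, hj, hh, hm, ha⟩
            have hjt : j < t := lt_of_lt_of_le hj hk
            have hm' : (Q a' j).toHome c0 = some hh := by rw [← hprev j hjt]; exact hm
            have hne : (Q a' j).toChild hh ≠ none := by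
              rw [(Q a' j).consistent] at hm'; simp [hm']
            exact ⟨j, hj, hh, hm', by rw [← hact hh j hjt hne]; exact ha⟩
          · rintro ⟨j, hj, hh, hm, ha⟩
            have hjt : j < t := lt_of_lt_of_le hj hk
            have hne : (Q a' j).toChild hh ≠ none := by
              rw [(Q a' j).consistent] at hm; simp [hm]
            exact ⟨j, hj, hh, by rw [hprev j hjt]; exact hm,
              by rw [hact hh j hjt hne]; exact ha⟩
        rw [hiff]
      · intro k hk h0
        unfold Market.activeH
        have hiff : (∃ j < k, (Q b j).toChild h0 ≠ none ∧ b h0 j = true) ↔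
            (∃ j < k, (Q a' j).toChild h0 ≠ none ∧ a' h0 j = true) := by
          constructor
          · rintro ⟨j, hj, hm, ha⟩
            have hjt : j < t := lt_of_lt_of_le hj hk
            have hm' : (Q a' j).toChild h0 ≠ none := by rw [← hprev j hjt]; exact hm
            exact ⟨j, hj, hm', by rw [← hact h0 j hjt hm']; exact ha⟩
          · rintro ⟨j, hj, hm, ha⟩
            have hjt : j < t := lt_of_lt_of_le hj hk
            exact ⟨j, hj, by rw [hprev j hjt]; exact hm,
              by rw [hact h0 j hjt hm]; exact ha⟩
        rw [hiff]
      · exact hprev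
  refine ⟨fun k hk => key k hk, ?_⟩
  intro x hx
  rcases hx with ⟨t, c0, hm, ha, hxv⟩ | ⟨hall, hx0⟩
  · rcases lt_trichotomy t t' with h1 | h1 | h1
    · rcases hfirst t h1 with hn | hf
      · rw [hn] at hm; exact absurd hm (by simp)
      · rw [hf] at ha; exact absurd ha (by simp)
    · subst h1
      exact Or.inl ⟨t, c0, by rw [key t le_rfl]; exact hm, hbh', hxv⟩
    · exfalso
      have hm' : (Q a' t).toHome c0 = some h := ((Q a' t).consistent c0 h).mpr hm
      have hactH := (hfeas a' t c0 h hm').2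
      exact hactH.2 ⟨t', h1, by rw [hoff]; simp, hacc⟩
  · exfalso
    have := hall t' c hoff
    rw [hacc] at this; exact absurd this (by simp)
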